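/- Energy decay along closed-loop trajectories: consider differentiable curves $\delta(t)\in\mathbb{R}^{\mathcal V}$, $\omega(t)\in\mathbb{R}^{\mathcal V}$, $E(t)\in\mathbb{R}^{\mathcal V}$ with $E_i(t)>0$, and $(P_g(t),P_l(t),v(t),\lambda_g(t),\lambda_l(t))$ satisfying: $\dot\delta_i=\omega_i$ for all $i\in\mathcal V$; $M_i\dot\omega_i=-P_i-A_i\omega_i+P_{gi}$ and $T_i\dot E_i=E_{fi}-E_i-(X_{di}-X'_{di})E_i^{-1}Q_i$ for $i\in\mathcal V_g$; the algebraic constraints $P_i=-A_i\omega_i-P_{li}$ and $Q_i=\bar Q_{li}$ for $i\in\mathcal V_l$; and the controller equations $\tau_g\dot P_g=-\nabla C(P_g)+\lambda_g-\omega_g$, $\tau_l\dot P_l=\nabla U(P_l)-\lambda_l+\omega_l$, $\tau_v\dot v=-D_{cg}^T\lambda_g-D_{cl}^T\lambda_l$, $\tau_{\lambda_g}\dot\lambda_g=D_{cg}v-P_g$, $\tau_{\lambda_l}\dot\lambda_l=D_{cl}v+P_l$, where $C$ is convex differentiable and $U$ concave differentiable. Let $(\bar\delta,\bar\omega=0,\bar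 E,\bar P_g,\bar P_l,\bar v,\bar\lambda_g,\bar\lambda_l)$ be an equilibrium of the same equations with $\bar E_i>0$. Define the shifted total energy $\bar H(t)=\bar H_p+\bar H_a+\bar H_c$, where $\bar H_p$ is the Bregman shift of $H_p$ (in the variables $(\delta,p_g,E)$ with $p_i=M_i\omega_i$) at the equilibrium, $\bar H_a(E_l)=\sum_{i\in\mathcal V_l}\big(\tfrac{\partial H_p}{\partial E_i}(\bar\delta,\bar E)\,E_i-\bar Q_{li}\log E_i\big)$, and $\bar H_c$ is the shifted controller storage from the $\tau$-weighted quadratic form. Then for all $t$: $\frac{d}{dt}\bar H = -\sum_{i\in\mathcal V_g}A_i\omega_i^2-\sum_{i\in\mathcal V_l}A_i\omega_i^2-\sum_{i\in\mathcal V_g}\frac{X_{di}-X'_{di}}{T_i}\Big(\frac{\partial\bar H}{\partial E_i}\Big)^2-(P_g-\bar P_g)^T(\nabla C(P_g)-\nabla C(\bar P_g))+(P_l-\bar P_l)^T(\nabla U(P_l)-\nabla U(\bar P_l)) \le 0$. -/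

import Mathlib

/-!
Energy decay along closed-loop trajectories of the structure-preserving power network
coupled with the primal-dual dynamic pricing algorithm.

Node set `V = Vg ∪ Vl` (the load set `Vl` is the complement of the generator set `Vg`),
symmetric susceptances `B i j = B j i` (zero for non-adjacent pairs, `B i i = 0`),
self-susceptances `Bs`.  `Ec` indexes the edges of the communication graph with
incidence matrix `Dc : V → Ec → ℝ` (rows `D_cg`, `D_cl`).  The momenta are
`p i = M i * ω i` (for generators).  Partial derivatives of the total shifted energy
with respect to `E i` are expressed via `deriv` of a one-variable slice
(`Function.update`), and the gradient `∇Hp(x̄)` appearing in the Bregman shift via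
`fderiv`.
-/

open Finset

/-- Active power injection `Pᵢ = ∑ⱼ Bᵢⱼ Eᵢ Eⱼ sin(δᵢ - δⱼ)`. -/
noncomputable def activeP {V : Type*} [Fintype V] (B : V → V → ℝ) (δ E : V → ℝ) (i : V) : ℝ :=
  ∑ j, B i j * E i * E j * Real.sin (δ i - δ j)

/-- Reactive power injection `Qᵢ = Bᵢᵢ Eᵢ² - ∑ⱼ Bᵢⱼ Eᵢ Eⱼ cos(δᵢ - δⱼ)`. -/
noncomputable def reactiveQ {V : Type*} [Fintype V] (B : V → V → ℝ) (Bs : V → ℝ)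
    (δ E : V → ℝ) (i : V) : ℝ :=
  Bs i * E i ^ 2 - ∑ j, B i j * E i * E j * Real.cos (δ i - δ j)

/-- The physical Hamiltonian `Hp` as a function of the state
`x = (δ, p_g, E) : (V → ℝ) × ({i // i ∈ Vg} → ℝ) × (V → ℝ)`:
`Hp x = ½ ∑_{i∈Vg} (pᵢ²/Mᵢ + (Eᵢ-Efᵢ)²/(Xdᵢ-Xd'ᵢ)) + ½ ∑_i Bsᵢ Eᵢ²
  - ∑_{(i,j)∈E} Bᵢⱼ Eᵢ Eⱼ cos(δᵢ-δⱼ)` (edge sum written as half the double sum). -/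
noncomputable def Hp {V : Type*} [Fintype V] [DecidableEq V] (Vg : Finset V)
    (M Xd Xd' Ef Bs : V → ℝ) (B : V → V → ℝ)
    (x : (V → ℝ) × ({i // i ∈ Vg} → ℝ) × (V → ℝ)) : ℝ :=
  (1/2) * ∑ i : {i // i ∈ Vg},
      ((x.2.1 i) ^ 2 / M i.1 + (x.2.2 i.1 - Ef i.1) ^ 2 / (Xd i.1 - Xd' i.1))
    + (1/2) * ∑ i, Bs i * (x.2.2 i) ^ 2
    - (1/2) * ∑ i, ∑ j, B i j * x.2.2 i * x.2.2 j * Real.cos (x.1 i - x.1 j)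

/-- Bregman shift of `Hp` at the equilibrium `x̄`:
`H̄p(x) = Hp(x) - (x - x̄)ᵀ ∇Hp(x̄) - Hp(x̄)`. -/
noncomputable def HbarP {V : Type*} [Fintype V] [DecidableEq V] (Vg : Finset V)
    (M Xd Xd' Ef Bs : V → ℝ) (B : V → V → ℝ)
    (xbar x : (V → ℝ) × ({i // i ∈ Vg} → ℝ) × (V → ℝ)) : ℝ :=
  Hp Vg M Xd Xd' Ef Bs B x
    - fderiv ℝ (Hp Vg M Xd Xd' Ef Bs B) xbar (x - xbar)
    - Hp Vg M Xd Xd' Ef Bs B xbar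

/-- Auxiliary energy `H̄ₐ(E_l) = ∑_{i∈Vl} (∂Hp/∂Eᵢ(x̄) · Eᵢ - Q̄ₗᵢ log Eᵢ)`. -/
noncomputable def HbarA {V : Type*} [Fintype V] [DecidableEq V] (Vg : Finset V)
    (M Xd Xd' Ef Bs : V → ℝ) (B : V → V → ℝ)
    (xbar : (V → ℝ) × ({i // i ∈ Vg} → ℝ) × (V → ℝ))
    (Qbar : {i // i ∉ Vg} → ℝ) (E : V → ℝ) : ℝ :=
  ∑ i : {i // i ∉ Vg},
    (fderiv ℝ (Hp Vg M Xd Xd' Ef Bs B) xbar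
        ((0 : V → ℝ), (0 : {i // i ∈ Vg} → ℝ), Pi.single i.1 (1:ℝ)) * E i.1
      - Qbar i * Real.log (E i.1))

/-- Shifted controller storage
`H̄c = ½(P_g-P̄_g)ᵀτ_g(P_g-P̄_g) + ½(P_l-P̄_l)ᵀτ_l(P_l-P̄_l) + ½(v-v̄)ᵀτ_v(v-v̄)
  + ½(λ_g-λ̄_g)ᵀτ_{lg}(λ_g-λ̄_g) + ½(λ_l-λ̄_l)ᵀτ_{ll}(λ_l-λ̄_l)`. -/
noncomputable def HbarC {V : Type*} [Fintype V] [DecidableEq V] (Vg : Finset V)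
    {Ec : Type*} [Fintype Ec]
    (τg τlg : {i // i ∈ Vg} → ℝ) (τl τll : {i // i ∉ Vg} → ℝ) (τv : Ec → ℝ)
    (Pgb lgb : {i // i ∈ Vg} → ℝ) (Plb llb : {i // i ∉ Vg} → ℝ) (vb : Ec → ℝ)
    (Pg lg : {i // i ∈ Vg} → ℝ) (Pl ll : {i // i ∉ Vg} → ℝ) (v : Ec → ℝ) : ℝ :=
  (1/2) * ∑ i, τg i * (Pg i - Pgb i) ^ 2
    + (1/2) * ∑ i, τl i * (Pl i - Plb i) ^ 2
    + (1/2) * ∑ e, τv e * (v e - vb e) ^ 2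
    + (1/2) * ∑ i, τlg i * (lg i - lgb i) ^ 2
    + (1/2) * ∑ i, τll i * (ll i - llb i) ^ 2

/-- Total shifted energy `H̄ = H̄p + H̄ₐ + H̄c` as a function of the full
(physical + controller) state. -/
noncomputable def HbarTot {V : Type*} [Fintype V] [DecidableEq V] (Vg : Finset V)
    {Ec : Type*} [Fintype Ec]
    (M Xd Xd' Ef Bs : V → ℝ) (B : V → V → ℝ)
    (xbar : (V → ℝ) × ({i // i ∈ Vg} → ℝ) × (V → ℝ))
    (Qbar : {i // i ∉ Vg} → ℝ)
    (τg τlg : {i // i ∈ Vg} → ℝ) (τl τll : {i // i ∉ Vg} → ℝ) (τv : Ec → ℝ)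
    (Pgb lgb : {i // i ∈ Vg} → ℝ) (Plb llb : {i // i ∉ Vg} → ℝ) (vb : Ec → ℝ)
    (δ : V → ℝ) (p : {i // i ∈ Vg} → ℝ) (E : V → ℝ)
    (Pg lg : {i // i ∈ Vg} → ℝ) (Pl ll : {i // i ∉ Vg} → ℝ) (v : Ec → ℝ) : ℝ :=
  HbarP Vg M Xd Xd' Ef Bs B xbar (δ, p, E)
    + HbarA Vg M Xd Xd' Ef Bs B xbar Qbar E
    + HbarC Vg τg τlg τl τll τv Pgb lgb Plb llb vb Pg lg Pl ll v

/-- The claimed value of `dH̄/dt`: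
`-∑_{i∈Vg} Aᵢωᵢ² - ∑_{i∈Vl} Aᵢωᵢ² - ∑_{i∈Vg} ((Xdᵢ-Xd'ᵢ)/Tᵢ)(∂H̄/∂Eᵢ)²
 - (P_g-P̄_g)ᵀ(∇C(P_g)-∇C(P̄_g)) + (P_l-P̄_l)ᵀ(∇U(P_l)-∇U(P̄_l))`,
where `∂H̄/∂Eᵢ` is the partial derivative of the total shifted energy in the
`Eᵢ`-direction at the current state. -/
noncomputable def decayRate {V : Type*} [Fintype V] [DecidableEq V] (Vg : Finset V)
    {Ec : Type*} [Fintype Ec]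
    (M A T Xd Xd' Ef Bs : V → ℝ) (B : V → V → ℝ)
    (xbar : (V → ℝ) × ({i // i ∈ Vg} → ℝ) × (V → ℝ))
    (Qbar : {i // i ∉ Vg} → ℝ)
    (τg τlg : {i // i ∈ Vg} → ℝ) (τl τll : {i // i ∉ Vg} → ℝ) (τv : Ec → ℝ)
    (Pgb lgb : {i // i ∈ Vg} → ℝ) (Plb llb : {i // i ∉ Vg} → ℝ) (vb : Ec → ℝ)
    (gradC : ({i // i ∈ Vg} → ℝ) → {i // i ∈ Vg} → ℝ)
    (gradU : ({i // i ∉ Vg} → ℝ) → {i // i ∉ Vg} → ℝ)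
    (δ : V → ℝ) (ω : V → ℝ) (E : V → ℝ)
    (Pg lg : {i // i ∈ Vg} → ℝ) (Pl ll : {i // i ∉ Vg} → ℝ) (v : Ec → ℝ) : ℝ :=
  -(∑ i : {i // i ∈ Vg}, A i.1 * ω i.1 ^ 2)
    - ∑ i : {i // i ∉ Vg}, A i.1 * ω i.1 ^ 2
    - ∑ i : {i // i ∈ Vg}, ((Xd i.1 - Xd' i.1) / T i.1) *
        (deriv (fun s => HbarTot Vg M Xd Xd' Ef Bs B xbar Qbar τg τlg τl τll τv
          Pgb lgb Plb llb vb δ (fun j => M j.1 * ω j.1) (Function.update E i.1 s)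
          Pg lg Pl ll v) (E i.1)) ^ 2
    - ∑ i : {i // i ∈ Vg}, (Pg i - Pgb i) * (gradC Pg i - gradC Pgb i)
    + ∑ i : {i // i ∉ Vg}, (Pl i - Plb i) * (gradU Pl i - gradU Plb i)

open Filter in
lemma convex_sub_grad {ι : Type*} [Fintype ι] [DecidableEq ι]
    {C : (ι → ℝ) → ℝ} {g : (ι → ℝ) → ι → ℝ}
    (hC : ConvexOn ℝ Set.univ C)
    (hg : ∀ x i, HasDerivAt (fun s => C (Function.update x i s)) (g x i) (x i))
    (a b : ι → ℝ) : ∑ i, (b i - a i) * g a i ≤ C b - C a := by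
  rcases isEmpty_or_nonempty ι with hι | hι
  · have hba : b = a := Subsingleton.elim _ _
    subst hba
    simp
  · set n : ℕ := Fintype.card ι with hn
    have hnpos : 0 < n := Fintype.card_pos
    have hn0 : (0:ℝ) < (n:ℝ) := by exact_mod_cast hnpos
    set z : ℝ → ι → (ι → ℝ) := fun t i => Function.update a i (a i - (n * t) * (b i - a i)) with hz
    have key : ∀ t ∈ Set.Ioc (0:ℝ) 1,
        -(∑ i, (C (z t i) - C a) / (n * t)) ≤ C b - C a := by
      intro t ht
      obtain ⟨ht0, ht1⟩ := ht
      have hnt : (0:ℝ) < n * t := by positivity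
      have hw1 : ∑ _i : ι, (1/(n:ℝ)) = 1 := by
        rw [Finset.sum_const, Finset.card_univ, ← hn, nsmul_eq_mul]
        field_simp
      have jensen := hC.map_sum_le (t := Finset.univ) (w := fun _ => 1/(n:ℝ))
        (p := z t) (fun _ _ => by positivity) hw1 (fun _ _ => Set.mem_univ _)
      have hpt : ∑ i : ι, (1/(n:ℝ)) • z t i = fun j => a j - t * (b j - a j) := by
        funext j
        rw [Finset.sum_apply]
        have hcomp : ∀ i : ι, ((1/(n:ℝ)) • z t i) j
            = (1/(n:ℝ)) * a j + (if i = j then (1/(n:ℝ)) * (-((n*t) * (b j - a j))) else 0) := by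
          intro i
          by_cases h : i = j
          · subst h
            simp only [hz, Pi.smul_apply, Function.update_self, smul_eq_mul, if_true]
            ring
          · simp [hz, Function.update_of_ne (Ne.symm h), smul_eq_mul, h]
        rw [Finset.sum_congr rfl (fun i _ => hcomp i), Finset.sum_add_distrib,
          Finset.sum_const, Finset.sum_ite_eq' Finset.univ j, Finset.card_univ, ← hn]
        simp only [Finset.mem_univ, if_true, nsmul_eq_mul]
        field_simp
        ring
      rw [hpt] at jensen
      have hsmul : ∑ i, (1/(n:ℝ)) • C (z t i) = ∑ i, (1/(n:ℝ)) * C (z t i) := by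
        simp [smul_eq_mul]
      rw [hsmul] at jensen
      have hmid := hC.2 (Set.mem_univ (fun j => a j + t * (b j - a j)))
        (Set.mem_univ (fun j => a j - t * (b j - a j)))
        (by norm_num : (0:ℝ) ≤ (1:ℝ)/2) (by norm_num : (0:ℝ) ≤ (1:ℝ)/2) (by norm_num)
      have hmid' : C a ≤ (1/2) * C (fun j => a j + t * (b j - a j))
          + (1/2) * C (fun j => a j - t * (b j - a j)) := by
        have harg : ((1:ℝ)/2) • (fun j => a j + t * (b j - a j))
            + ((1:ℝ)/2) • (fun j => a j - t * (b j - a j)) = a := by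
          funext j
          simp only [Pi.add_apply, Pi.smul_apply, smul_eq_mul]
          ring
        rw [harg] at hmid
        simpa [smul_eq_mul] using hmid
      have hseg := hC.2 (Set.mem_univ a) (Set.mem_univ b)
        (by linarith : (0:ℝ) ≤ 1 - t) (le_of_lt ht0) (by ring)
      have hseg' : C (fun j => a j + t * (b j - a j)) ≤ (1-t) * C a + t * C b := by
        have harg : (1-t) • a + t • b = fun j => a j + t * (b j - a j) := by
          funext j
          simp only [Pi.add_apply, Pi.smul_apply, smul_eq_mul]
          ring
        rw [harg] at hseg
        simpa [smul_eq_mul] using hseg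
      set S : ℝ := ∑ i, (1/(n:ℝ)) * C (z t i) with hS
      have hSsum : ∑ i, (C (z t i) - C a)/((n:ℝ)*t) = (S - C a)/t := by
        rw [eq_div_iff (ne_of_gt ht0), Finset.sum_mul]
        have hterm : ∀ i : ι, (C (z t i) - C a)/((n:ℝ)*t) * t
            = (1/(n:ℝ)) * C (z t i) - (1/(n:ℝ)) * C a := by
          intro i
          field_simp
        rw [Finset.sum_congr rfl (fun i _ => hterm i), Finset.sum_sub_distrib,
          Finset.sum_const, Finset.card_univ, ← hn, nsmul_eq_mul, hS]
        field_simp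
      rw [hSsum, neg_div', div_le_iff₀ ht0]
      nlinarith [jensen, hmid', hseg']
    have hterm : ∀ i : ι, Tendsto (fun t => (C (z t i) - C a) / ((n:ℝ) * t))
        (nhdsWithin 0 (Set.Ioi 0)) (nhds (-((b i - a i) * g a i))) := by
      intro i
      by_cases hd : b i - a i = 0
      · have hzz : ∀ t : ℝ, z t i = a := by
          intro t
          simp [hz, hd, Function.update_eq_self]
        simp only [hzz, sub_self, zero_div, hd, zero_mul, neg_zero]
        exact tendsto_const_nhds
      · have hy : Tendsto (fun t : ℝ => a i - ((n:ℝ)*t)*(b i - a i))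
            (nhdsWithin 0 (Set.Ioi 0)) (nhdsWithin (a i) {a i}ᶜ) := by
          apply tendsto_nhdsWithin_of_tendsto_nhds_of_eventually_within
          · have hcont : Continuous fun t : ℝ => a i - ((n:ℝ)*t)*(b i - a i) := by continuity
            have h0 := hcont.tendsto 0
            simp only [mul_zero, zero_mul, sub_zero] at h0
            exact h0.mono_left nhdsWithin_le_nhds
          · filter_upwards [self_mem_nhdsWithin] with t ht
            have ht0 : (0:ℝ) < t := ht
            simp only [Set.mem_compl_iff, Set.mem_singleton_iff]
            intro hcon
            have hzero : ((n:ℝ)*t)*(b i - a i) = 0 := by linarith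
            rcases mul_eq_zero.1 hzero with h | h
            · have : ((n:ℝ)*t) ≠ 0 := by positivity
              exact this h
            · exact hd h
        have hslope := hasDerivAt_iff_tendsto_slope.1 (hg a i)
        have hcomp := (hslope.comp hy).mul_const (-(b i - a i))
        have heq : (fun t : ℝ => slope (fun s => C (Function.update a i s)) (a i)
              (a i - ((n:ℝ)*t)*(b i - a i)) * (-(b i - a i)))
            =ᶠ[nhdsWithin 0 (Set.Ioi 0)] (fun t => (C (z t i) - C a) / ((n:ℝ) * t)) := by
          filter_upwards [self_mem_nhdsWithin] with t ht
          have ht0 : (0:ℝ) < t := ht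
          rw [slope_def_field, Function.update_eq_self, hz]
          field_simp
          ring
        have hval : g a i * (-(b i - a i)) = -((b i - a i) * g a i) := by ring
        rw [hval] at hcomp
        exact hcomp.congr' heq
    have hlim : Tendsto (fun t => -(∑ i, (C (z t i) - C a)/((n:ℝ)*t)))
        (nhdsWithin 0 (Set.Ioi 0)) (nhds (∑ i, (b i - a i) * g a i)) := by
      have hsum := tendsto_finset_sum Finset.univ (fun i (_ : i ∈ Finset.univ) => hterm i)
      have hval : -∑ i : ι, -((b i - a i) * g a i) = ∑ i, (b i - a i) * g a i := by
        simp
      rw [← hval]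
      exact hsum.neg
    refine le_of_tendsto hlim ?_
    filter_upwards [Ioc_mem_nhdsGT_of_mem (Set.mem_Ico.2 ⟨le_refl (0:ℝ), zero_lt_one⟩)] with t ht
    exact key t ht

lemma convex_grad_mono {ι : Type*} [Fintype ι] [DecidableEq ι]
    {C : (ι → ℝ) → ℝ} {g : (ι → ℝ) → ι → ℝ}
    (hC : ConvexOn ℝ Set.univ C)
    (hg : ∀ x i, HasDerivAt (fun s => C (Function.update x i s)) (g x i) (x i))
    (a b : ι → ℝ) : 0 ≤ ∑ i, (b i - a i) * (g b i - g a i) := by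
  have h1 := convex_sub_grad hC hg a b
  have h2 := convex_sub_grad hC hg b a
  have he : ∑ i, (b i - a i) * (g b i - g a i)
      = -(∑ i, (a i - b i) * g b i) - ∑ i, (b i - a i) * g a i := by
    rw [← Finset.sum_neg_distrib, ← Finset.sum_sub_distrib]
    refine Finset.sum_congr rfl fun i _ => by ring
  rw [he]
  linarith

lemma concave_grad_mono {ι : Type*} [Fintype ι] [DecidableEq ι]
    {U : (ι → ℝ) → ℝ} {g : (ι → ℝ) → ι → ℝ}
    (hU : ConcaveOn ℝ Set.univ U)
    (hg : ∀ x i, HasDerivAt (fun s => U (Function.update x i s)) (g x i) (x i))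
    (a b : ι → ℝ) : ∑ i, (b i - a i) * (g b i - g a i) ≤ 0 := by
  have h := convex_grad_mono (C := fun x => -U x) (g := fun x i => -g x i)
    hU.neg (fun x i => (hg x i).neg) a b
  have he : ∑ i, (b i - a i) * (-g b i - -g a i)
      = -∑ i, (b i - a i) * (g b i - g a i) := by
    rw [← Finset.sum_neg_distrib]
    exact Finset.sum_congr rfl fun i _ => by ring
  rw [he] at h
  linarith

lemma gE_eq_Q_div {V : Type*} [Fintype V] (B : V → V → ℝ) (Bs : V → ℝ)
    (δ' E' : V → ℝ) (i : V) (h : E' i ≠ 0) :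
    Bs i * E' i - ∑ j, B i j * E' j * Real.cos (δ' i - δ' j)
      = reactiveQ B Bs δ' E' i / E' i := by
  unfold reactiveQ
  rw [eq_div_iff h, sub_mul, Finset.sum_mul]
  congr 1
  · ring
  · exact Finset.sum_congr rfl fun j _ => by ring

section HpDeriv

variable {V : Type*} [Fintype V] [DecidableEq V] (Vg : Finset V)
variable (M Xd Xd' Ef Bs : V → ℝ) (B : V → V → ℝ)

set_option linter.unusedSectionVars false

lemma double_sum_cos_swap (hBsym : ∀ i j, B i j = B j i) (δ' E' dE : V → ℝ) :
    ∑ i, ∑ j, B i j * E' i * dE j * Real.cos (δ' i - δ' j)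
      = ∑ i, ∑ j, B i j * E' j * dE i * Real.cos (δ' i - δ' j) := by
  rw [Finset.sum_comm]
  refine Finset.sum_congr rfl fun i _ => Finset.sum_congr rfl fun j _ => ?_
  rw [hBsym j i, show δ' j - δ' i = -(δ' i - δ' j) by ring, Real.cos_neg]

lemma double_sum_sin_swap (hBsym : ∀ i j, B i j = B j i) (δ' E' dδ : V → ℝ) :
    ∑ i, ∑ j, B i j * E' i * E' j * Real.sin (δ' i - δ' j) * dδ j
      = -∑ i, ∑ j, B i j * E' i * E' j * Real.sin (δ' i - δ' j) * dδ i := by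
  rw [Finset.sum_comm, ← Finset.sum_neg_distrib]
  refine Finset.sum_congr rfl fun i _ => ?_
  rw [← Finset.sum_neg_distrib]
  refine Finset.sum_congr rfl fun j _ => ?_
  rw [hBsym j i, show δ' j - δ' i = -(δ' i - δ' j) by ring, Real.sin_neg]
  ring

lemma hasDerivAt_Hp_curve
    (hBsym : ∀ i j, B i j = B j i)
    (γδ γE : ℝ → V → ℝ) (γp : ℝ → {i // i ∈ Vg} → ℝ)
    (dδ dE : V → ℝ) (dp : {i // i ∈ Vg} → ℝ) (t : ℝ)
    (hδ : ∀ i, HasDerivAt (fun s => γδ s i) (dδ i) t)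
    (hp : ∀ i, HasDerivAt (fun s => γp s i) (dp i) t)
    (hE : ∀ i, HasDerivAt (fun s => γE s i) (dE i) t) :
    HasDerivAt (fun s => Hp Vg M Xd Xd' Ef Bs B (γδ s, γp s, γE s))
      (∑ i, activeP B (γδ t) (γE t) i * dδ i
        + ∑ i : {i // i ∈ Vg}, (γp t i / M i.1) * dp i
        + ∑ i : {i // i ∈ Vg}, ((γE t i.1 - Ef i.1) / (Xd i.1 - Xd' i.1)) * dE i.1
        + ∑ i, (Bs i * γE t i - ∑ j, B i j * γE t j * Real.cos (γδ t i - γδ t j)) * dE i) t := by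
  have hA : HasDerivAt (fun s => (1/2 : ℝ) * ∑ i : {i // i ∈ Vg},
        ((γp s i)^2 / M i.1 + (γE s i.1 - Ef i.1)^2/(Xd i.1 - Xd' i.1)))
      (∑ i : {i // i ∈ Vg},
        ((γp t i / M i.1) * dp i + ((γE t i.1 - Ef i.1)/(Xd i.1 - Xd' i.1)) * dE i.1)) t := by
    have h := HasDerivAt.const_mul (1/2 : ℝ) (HasDerivAt.fun_sum
      (fun (i : {i // i ∈ Vg}) (_ : i ∈ Finset.univ) =>
        HasDerivAt.add (((hp i).pow 2).div_const (M i.1))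
          ((((hE i.1).sub_const (Ef i.1)).pow 2).div_const (Xd i.1 - Xd' i.1))))
    refine HasDerivAt.congr_deriv h (Eq.symm ?_)
    rw [Finset.mul_sum]
    refine Finset.sum_congr rfl fun i _ => ?_
    ring
  have hB : HasDerivAt (fun s => (1/2 : ℝ) * ∑ i, Bs i * (γE s i)^2)
      (∑ i, (Bs i * γE t i) * dE i) t := by
    have h := HasDerivAt.const_mul (1/2 : ℝ) (HasDerivAt.fun_sum
      (fun i (_ : i ∈ Finset.univ) => ((hE i).pow 2).const_mul (Bs i)))
    refine HasDerivAt.congr_deriv h (Eq.symm ?_)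
    rw [Finset.mul_sum]
    refine Finset.sum_congr rfl fun i _ => ?_
    ring
  have hC : HasDerivAt (fun s => (1/2 : ℝ) * ∑ i, ∑ j,
        B i j * γE s i * γE s j * Real.cos (γδ s i - γδ s j))
      (∑ i, (∑ j, B i j * γE t j * Real.cos (γδ t i - γδ t j)) * dE i
        - ∑ i, activeP B (γδ t) (γE t) i * dδ i) t := by
    have hij : ∀ i j, HasDerivAt
        (fun s => B i j * γE s i * γE s j * Real.cos (γδ s i - γδ s j))
        (B i j * γE t j * dE i * Real.cos (γδ t i - γδ t j)
          + B i j * γE t i * dE j * Real.cos (γδ t i - γδ t j)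
          - B i j * γE t i * γE t j * Real.sin (γδ t i - γδ t j) * dδ i
          + B i j * γE t i * γE t j * Real.sin (γδ t i - γδ t j) * dδ j) t := by
      intro i j
      have hcos : HasDerivAt (fun s => Real.cos (γδ s i - γδ s j))
          (-Real.sin (γδ t i - γδ t j) * (dδ i - dδ j)) t := ((hδ i).sub (hδ j)).cos
      have h := (((hE i).const_mul (B i j)).mul (hE j)).mul hcos
      refine HasDerivAt.congr_deriv h (Eq.symm ?_)
      simp only [Pi.mul_apply]
      ring
    have h := HasDerivAt.const_mul (1/2 : ℝ) (HasDerivAt.fun_sum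
      (fun i (_ : i ∈ Finset.univ) => HasDerivAt.fun_sum (fun j (_ : j ∈ Finset.univ) => hij i j)))
    refine HasDerivAt.congr_deriv h (Eq.symm ?_)
    simp only [Finset.sum_add_distrib, Finset.sum_sub_distrib]
    rw [double_sum_cos_swap B hBsym (γδ t) (γE t) dE,
      double_sum_sin_swap B hBsym (γδ t) (γE t) dδ]
    have h1 : ∑ i, (∑ j, B i j * γE t j * Real.cos (γδ t i - γδ t j)) * dE i
        = ∑ i, ∑ j, B i j * γE t j * dE i * Real.cos (γδ t i - γδ t j) := by
      refine Finset.sum_congr rfl fun i _ => ?_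
      rw [Finset.sum_mul]
      exact Finset.sum_congr rfl fun j _ => by ring
    have h2 : ∑ i, activeP B (γδ t) (γE t) i * dδ i
        = ∑ i, ∑ j, B i j * γE t i * γE t j * Real.sin (γδ t i - γδ t j) * dδ i := by
      refine Finset.sum_congr rfl fun i _ => ?_
      rw [activeP, Finset.sum_mul]
    rw [h1, h2]
    ring
  have htot := (hA.add hB).sub hC
  have hval : ∑ i, activeP B (γδ t) (γE t) i * dδ i
        + ∑ i : {i // i ∈ Vg}, (γp t i / M i.1) * dp i
        + ∑ i : {i // i ∈ Vg}, ((γE t i.1 - Ef i.1) / (Xd i.1 - Xd' i.1)) * dE i.1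
        + ∑ i, (Bs i * γE t i - ∑ j, B i j * γE t j * Real.cos (γδ t i - γδ t j)) * dE i
      = ∑ i : {i // i ∈ Vg},
          ((γp t i / M i.1) * dp i + ((γE t i.1 - Ef i.1)/(Xd i.1 - Xd' i.1)) * dE i.1)
        + ∑ i, (Bs i * γE t i) * dE i
        - (∑ i, (∑ j, B i j * γE t j * Real.cos (γδ t i - γδ t j)) * dE i
            - ∑ i, activeP B (γδ t) (γE t) i * dδ i) := by
    rw [Finset.sum_add_distrib]
    have e1 : ∑ i, (Bs i * γE t i - ∑ j, B i j * γE t j * Real.cos (γδ t i - γδ t j)) * dE i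
        = ∑ i, (Bs i * γE t i) * dE i
          - ∑ i, (∑ j, B i j * γE t j * Real.cos (γδ t i - γδ t j)) * dE i := by
      rw [← Finset.sum_sub_distrib]
      exact Finset.sum_congr rfl fun i _ => by ring
    rw [e1]
    ring
  rw [hval]
  exact htot

lemma differentiable_Hp : Differentiable ℝ (Hp Vg M Xd Xd' Ef Bs B) := by
  unfold Hp
  fun_prop

lemma fderiv_Hp_apply (hBsym : ∀ i j, B i j = B j i)
    (xbar u : (V → ℝ) × ({i // i ∈ Vg} → ℝ) × (V → ℝ)) :
    fderiv ℝ (Hp Vg M Xd Xd' Ef Bs B) xbar u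
      = ∑ i, activeP B xbar.1 xbar.2.2 i * u.1 i
        + ∑ i : {i // i ∈ Vg}, (xbar.2.1 i / M i.1) * u.2.1 i
        + ∑ i : {i // i ∈ Vg}, ((xbar.2.2 i.1 - Ef i.1)/(Xd i.1 - Xd' i.1)) * u.2.2 i.1
        + ∑ i, (Bs i * xbar.2.2 i
            - ∑ j, B i j * xbar.2.2 j * Real.cos (xbar.1 i - xbar.1 j)) * u.2.2 i := by
  set γδ : ℝ → V → ℝ := fun s i => xbar.1 i + s * u.1 i with hγδ
  set γp : ℝ → {i // i ∈ Vg} → ℝ := fun s i => xbar.2.1 i + s * u.2.1 i with hγp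
  set γE : ℝ → V → ℝ := fun s i => xbar.2.2 i + s * u.2.2 i with hγE
  have hδc : ∀ i, HasDerivAt (fun s : ℝ => γδ s i) (u.1 i) 0 :=
    fun i => (hasDerivAt_mul_const (u.1 i)).const_add (xbar.1 i)
  have hpc : ∀ i, HasDerivAt (fun s : ℝ => γp s i) (u.2.1 i) 0 :=
    fun i => (hasDerivAt_mul_const (u.2.1 i)).const_add (xbar.2.1 i)
  have hEc : ∀ i, HasDerivAt (fun s : ℝ => γE s i) (u.2.2 i) 0 :=
    fun i => (hasDerivAt_mul_const (u.2.2 i)).const_add (xbar.2.2 i)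
  have h1 := hasDerivAt_Hp_curve Vg M Xd Xd' Ef Bs B hBsym γδ γE γp u.1 u.2.2 u.2.1 0 hδc hpc hEc
  have hγδ0 : γδ 0 = xbar.1 := by funext i; simp [hγδ]
  have hγp0 : γp 0 = xbar.2.1 := by funext i; simp [hγp]
  have hγE0 : γE 0 = xbar.2.2 := by funext i; simp [hγE]
  rw [hγδ0, hγE0, hγp0] at h1
  have hline : HasDerivAt (fun s => ((γδ s, γp s, γE s) :
      (V → ℝ) × ({i // i ∈ Vg} → ℝ) × (V → ℝ))) u 0 :=
    (hasDerivAt_pi.2 hδc).prodMk ((hasDerivAt_pi.2 hpc).prodMk (hasDerivAt_pi.2 hEc))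
  have hline0 : ((γδ 0, γp 0, γE 0) : (V → ℝ) × ({i // i ∈ Vg} → ℝ) × (V → ℝ)) = xbar := by
    rw [hγδ0, hγp0, hγE0]
  have h2 : HasDerivAt (fun s => Hp Vg M Xd Xd' Ef Bs B (γδ s, γp s, γE s))
      (fderiv ℝ (Hp Vg M Xd Xd' Ef Bs B) xbar u) 0 := by
    have hf := (differentiable_Hp Vg M Xd Xd' Ef Bs B xbar).hasFDerivAt
    nth_rewrite 2 [← hline0] at hf
    exact hf.comp_hasDerivAt 0 hline
  exact (h2.unique h1)

end HpDeriv

set_option maxHeartbeats 2000000 in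
/-- **Energy decay along closed-loop trajectories.**  Along differentiable solutions of
the structure-preserving power network (swing and flux-decay dynamics at the
generators, frequency-dependent loads with constant reactive demand) interconnected
with the primal-dual dynamic pricing controller, the total shifted energy
`H̄ = H̄p + H̄ₐ + H̄c` (Bregman shift at an equilibrium with `ω̄ = 0`) satisfies
`dH̄/dt = -ω_gᵀA_gω_g - ω_lᵀA_lω_l - (∇_{E_g}H̄)ᵀ R_g ∇_{E_g}H̄
  - (P_g-P̄_g)ᵀ(∇C(P_g)-∇C(P̄_g)) + (P_l-P̄_l)ᵀ(∇U(P_l)-∇U(P̄_l)) ≤ 0`. -/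
theorem closed_loop_energy_decay
    {V : Type*} [Fintype V] [DecidableEq V] {Ec : Type*} [Fintype Ec]
    (Vg : Finset V)
    -- network and generator parameters
    (M A T Xd Xd' Ef Bs : V → ℝ) (B : V → V → ℝ)
    (hM : ∀ i, 0 < M i) (hA : ∀ i, 0 < A i) (hT : ∀ i, 0 < T i)
    (hX : ∀ i, Xd' i < Xd i)
    (hBsym : ∀ i j, B i j = B j i) (hBdiag : ∀ i, B i i = 0)
    -- constant reactive power demands at the loads
    (Qbar : {i // i ∉ Vg} → ℝ) (hQbar : ∀ i, 0 ≤ Qbar i)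
    -- communication graph incidence matrix and positive diagonal controller gains
    (Dc : V → Ec → ℝ)
    (τg τlg : {i // i ∈ Vg} → ℝ) (τl τll : {i // i ∉ Vg} → ℝ) (τv : Ec → ℝ)
    (hτg : ∀ i, 0 < τg i) (hτlg : ∀ i, 0 < τlg i) (hτl : ∀ i, 0 < τl i)
    (hτll : ∀ i, 0 < τll i) (hτv : ∀ e, 0 < τv e)
    -- convex cost and concave utility, with their gradients
    (C : ({i // i ∈ Vg} → ℝ) → ℝ) (gradC : ({i // i ∈ Vg} → ℝ) → {i // i ∈ Vg} → ℝ)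
    (hCconv : ConvexOn ℝ Set.univ C)
    (hgradC : ∀ x i, HasDerivAt (fun s => C (Function.update x i s)) (gradC x i) (x i))
    (U : ({i // i ∉ Vg} → ℝ) → ℝ) (gradU : ({i // i ∉ Vg} → ℝ) → {i // i ∉ Vg} → ℝ)
    (hUconc : ConcaveOn ℝ Set.univ U)
    (hgradU : ∀ x i, HasDerivAt (fun s => U (Function.update x i s)) (gradU x i) (x i))
    -- the closed-loop trajectory
    (δ ω E : ℝ → V → ℝ)
    (Pg lg : ℝ → {i // i ∈ Vg} → ℝ) (Pl ll : ℝ → {i // i ∉ Vg} → ℝ) (v : ℝ → Ec → ℝ)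
    (hEpos : ∀ t i, 0 < E t i)
    -- physical dynamics: δ̇ᵢ = ωᵢ on all nodes
    (hδdot : ∀ t i, HasDerivAt (fun s => δ s i) (ω t i) t)
    -- swing dynamics at the generators: Mᵢω̇ᵢ = -Pᵢ - Aᵢωᵢ + P_{gi}
    (hωdot : ∀ t i (hi : i ∈ Vg), HasDerivAt (fun s => ω s i)
      ((-(activeP B (δ t) (E t) i) - A i * ω t i + Pg t ⟨i, hi⟩) / M i) t)
    -- flux-decay dynamics at the generators: TᵢĖᵢ = Efᵢ - Eᵢ - (Xdᵢ-Xd'ᵢ)Eᵢ⁻¹Qᵢ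
    (hEdotg : ∀ t i, i ∈ Vg → HasDerivAt (fun s => E s i)
      ((Ef i - E t i - (Xd i - Xd' i) * (E t i)⁻¹ * reactiveQ B Bs (δ t) (E t) i) / T i) t)
    -- the load voltages are differentiable curves
    (hEdotl : ∀ t i, i ∉ Vg → ∃ d, HasDerivAt (fun s => E s i) d t)
    -- algebraic constraints at the loads: Pᵢ = -Aᵢωᵢ - P_{li} and Qᵢ = Q̄_{li}
    (hPalg : ∀ t i (hi : i ∉ Vg), activeP B (δ t) (E t) i = -(A i * ω t i) - Pl t ⟨i, hi⟩)
    (hQalg : ∀ t i (hi : i ∉ Vg), reactiveQ B Bs (δ t) (E t) i = Qbar ⟨i, hi⟩)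
    -- controller dynamics: τ_g Ṗ_g = -∇C(P_g) + λ_g - ω_g
    (hPgdot : ∀ t i, HasDerivAt (fun s => Pg s i)
      ((-(gradC (Pg t) i) + lg t i - ω t i.1) / τg i) t)
    -- τ_l Ṗ_l = ∇U(P_l) - λ_l + ω_l
    (hPldot : ∀ t i, HasDerivAt (fun s => Pl s i)
      ((gradU (Pl t) i - ll t i + ω t i.1) / τl i) t)
    -- τ_v v̇ = -D_cgᵀλ_g - D_clᵀλ_l
    (hvdot : ∀ t e, HasDerivAt (fun s => v s e)
      ((-(∑ i : {i // i ∈ Vg}, Dc i.1 e * lg t i)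
        - ∑ i : {i // i ∉ Vg}, Dc i.1 e * ll t i) / τv e) t)
    -- τ_{lg} λ̇_g = D_cg v - P_g
    (hlgdot : ∀ t i, HasDerivAt (fun s => lg s i)
      ((∑ e, Dc i.1 e * v t e - Pg t i) / τlg i) t)
    -- τ_{ll} λ̇_l = D_cl v + P_l
    (hlldot : ∀ t i, HasDerivAt (fun s => ll s i)
      ((∑ e, Dc i.1 e * v t e + Pl t i) / τll i) t)
    -- the equilibrium (δ̄, ω̄ = 0, Ē, P̄_g, P̄_l, v̄, λ̄_g, λ̄_l)
    (δb Eb : V → ℝ) (Pgb lgb : {i // i ∈ Vg} → ℝ) (Plb llb : {i // i ∉ Vg} → ℝ)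
    (vb : Ec → ℝ)
    (hEbpos : ∀ i, 0 < Eb i)
    (heqω : ∀ i (hi : i ∈ Vg), 0 = -(activeP B δb Eb i) - A i * 0 + Pgb ⟨i, hi⟩)
    (heqE : ∀ i, i ∈ Vg →
      0 = Ef i - Eb i - (Xd i - Xd' i) * (Eb i)⁻¹ * reactiveQ B Bs δb Eb i)
    (heqPl : ∀ i (hi : i ∉ Vg), activeP B δb Eb i = -(A i * 0) - Plb ⟨i, hi⟩)
    (heqQl : ∀ i (hi : i ∉ Vg), reactiveQ B Bs δb Eb i = Qbar ⟨i, hi⟩)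
    (heqPg : ∀ i, 0 = -(gradC Pgb i) + lgb i - 0)
    (heqPlc : ∀ i, 0 = gradU Plb i - llb i + 0)
    (heqv : ∀ e, 0 = -(∑ i : {i // i ∈ Vg}, Dc i.1 e * lgb i)
      - ∑ i : {i // i ∉ Vg}, Dc i.1 e * llb i)
    (heqlg : ∀ i, 0 = ∑ e, Dc i.1 e * vb e - Pgb i)
    (heqll : ∀ i, 0 = ∑ e, Dc i.1 e * vb e + Plb i) :
    -- conclusion: for all t, dH̄/dt equals the dissipation expression, which is ≤ 0
    ∀ t : ℝ,
      HasDerivAt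
        (fun s => HbarTot Vg M Xd Xd' Ef Bs B (δb, 0, Eb) Qbar τg τlg τl τll τv
          Pgb lgb Plb llb vb
          (δ s) (fun i => M i.1 * ω s i.1) (E s) (Pg s) (lg s) (Pl s) (ll s) (v s))
        (decayRate Vg M A T Xd Xd' Ef Bs B (δb, 0, Eb) Qbar τg τlg τl τll τv
          Pgb lgb Plb llb vb gradC gradU
          (δ t) (ω t) (E t) (Pg t) (lg t) (Pl t) (ll t) (v t)) t
      ∧
      decayRate Vg M A T Xd Xd' Ef Bs B (δb, 0, Eb) Qbar τg τlg τl τll τv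
          Pgb lgb Plb llb vb gradC gradU
          (δ t) (ω t) (E t) (Pg t) (lg t) (Pl t) (ll t) (v t) ≤ 0 := by
  intro t
  have hMne : ∀ i, M i ≠ 0 := fun i => ne_of_gt (hM i)
  have hTne : ∀ i, T i ≠ 0 := fun i => ne_of_gt (hT i)
  have hXne : ∀ i, Xd i - Xd' i ≠ 0 := fun i => ne_of_gt (sub_pos.2 (hX i))
  have hEne : ∀ i, E t i ≠ 0 := fun i => ne_of_gt (hEpos t i)
  have hEbne : ∀ i, Eb i ≠ 0 := fun i => ne_of_gt (hEbpos i)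
  -- choose a derivative for every voltage coordinate
  obtain ⟨dE, hdE, hdEg⟩ : ∃ dE : V → ℝ, (∀ i, HasDerivAt (fun s => E s i) (dE i) t)
      ∧ ∀ i, i ∈ Vg → dE i
        = (Ef i - E t i - (Xd i - Xd' i) * (E t i)⁻¹ * reactiveQ B Bs (δ t) (E t) i) / T i := by
    refine ⟨fun i => if h : i ∈ Vg
      then (Ef i - E t i - (Xd i - Xd' i) * (E t i)⁻¹ * reactiveQ B Bs (δ t) (E t) i) / T i
      else Classical.choose (hEdotl t i h), fun i => ?_, fun i hi => dif_pos hi⟩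
    dsimp only
    by_cases h : i ∈ Vg
    · rw [dif_pos h]
      exact hEdotg t i h
    · rw [dif_neg h]
      exact Classical.choose_spec (hEdotl t i h)
  -- generic splitting of a sum over all nodes into generators and loads
  have hsplit : ∀ f : V → ℝ, ∑ i, f i
      = ∑ i : {i // i ∈ Vg}, f i.1 + ∑ i : {i // i ∉ Vg}, f i.1 := by
    intro f
    rw [← Finset.sum_add_sum_compl Vg f]
    congr 1
    · exact Finset.sum_subtype Vg (fun x => Iff.rfl) f
    · exact Finset.sum_subtype Vgᶜ (fun x => Finset.mem_compl) f
  -- the gradient of Hp at the equilibrium point, applied to an arbitrary vector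
  have hfdapp : ∀ u : (V → ℝ) × ({i // i ∈ Vg} → ℝ) × (V → ℝ),
      fderiv ℝ (Hp Vg M Xd Xd' Ef Bs B) (δb, 0, Eb) u
        = ∑ i, activeP B δb Eb i * u.1 i
          + ∑ i : {i // i ∈ Vg}, ((Eb i.1 - Ef i.1) / (Xd i.1 - Xd' i.1)) * u.2.2 i.1
          + ∑ i, (Bs i * Eb i - ∑ j, B i j * Eb j * Real.cos (δb i - δb j)) * u.2.2 i := by
    intro u
    rw [fderiv_Hp_apply Vg M Xd Xd' Ef Bs B hBsym (δb, 0, Eb) u]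
    simp
  have hfdsingle : ∀ i : {i // i ∉ Vg},
      fderiv ℝ (Hp Vg M Xd Xd' Ef Bs B) (δb, 0, Eb)
          ((0 : V → ℝ), (0 : {i // i ∈ Vg} → ℝ), Pi.single i.1 (1:ℝ))
        = Bs i.1 * Eb i.1 - ∑ j, B i.1 j * Eb j * Real.cos (δb i.1 - δb j) := by
    intro i
    rw [hfdapp]
    dsimp only
    have h0 : ∑ j, activeP B δb Eb j * (0 : V → ℝ) j = 0 := by simp
    have h1 : ∑ j : {i // i ∈ Vg}, ((Eb j.1 - Ef j.1) / (Xd j.1 - Xd' j.1))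
        * (Pi.single i.1 (1:ℝ) : V → ℝ) j.1 = 0 :=
      Finset.sum_eq_zero fun j _ => by
        rw [Pi.single_eq_of_ne (fun hc : j.1 = i.1 => i.2 (hc ▸ j.2)), mul_zero]
    have h2 : ∑ j, (Bs j * Eb j - ∑ k, B j k * Eb k * Real.cos (δb j - δb k))
        * (Pi.single i.1 (1:ℝ) : V → ℝ) j
        = Bs i.1 * Eb i.1 - ∑ k, B i.1 k * Eb k * Real.cos (δb i.1 - δb k) := by
      rw [Finset.sum_eq_single i.1]
      · rw [Pi.single_eq_same, mul_one]
      · intro b _ hb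
        rw [Pi.single_eq_of_ne hb, mul_zero]
      · intro h
        exact absurd (Finset.mem_univ i.1) h
    rw [h0, h1, h2, zero_add, zero_add]
  -- equilibrium: the E-gradient of the shifted energy vanishes at the generators
  have hcbar0 : ∀ i, i ∈ Vg →
      (Eb i - Ef i) / (Xd i - Xd' i)
        + (Bs i * Eb i - ∑ j, B i j * Eb j * Real.cos (δb i - δb j)) = 0 := by
    intro i hi
    rw [gE_eq_Q_div B Bs δb Eb i (hEbne i)]
    have h := heqE i hi
    field_simp [hEbne i, hXne i] at h ⊢
    first
      | linear_combination h
      | linear_combination -h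
      | linarith [h]
  have hQloadt : ∀ i, ∀ hi : i ∉ Vg,
      Bs i * E t i - ∑ j, B i j * E t j * Real.cos (δ t i - δ t j)
        = Qbar ⟨i, hi⟩ / E t i := by
    intro i hi
    rw [gE_eq_Q_div B Bs (δ t) (E t) i (hEne i), hQalg t i hi]
  -- momentum derivative at the generators
  have hdp : ∀ i : {i // i ∈ Vg}, HasDerivAt (fun s => M i.1 * ω s i.1)
      (-(activeP B (δ t) (E t) i.1) - A i.1 * ω t i.1 + Pg t i) t := by
    intro i
    have h := (hωdot t i.1 i.2).const_mul (M i.1)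
    refine HasDerivAt.congr_deriv h (Eq.symm ?_)
    simp only [Subtype.coe_eta]
    field_simp [hMne i.1]
  -- derivative of the physical hamiltonian along the trajectory
  have hHp1 := hasDerivAt_Hp_curve Vg M Xd Xd' Ef Bs B hBsym δ E
    (fun s i => M i.1 * ω s i.1) (ω t) dE
    (fun i => -(activeP B (δ t) (E t) i.1) - A i.1 * ω t i.1 + Pg t i) t
    (hδdot t) hdp hdE
  -- derivative of the linear (Bregman) term along the trajectory
  have hFd1 : HasDerivAt (fun s => fderiv ℝ (Hp Vg M Xd Xd' Ef Bs B) (δb, 0, Eb)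
        ((δ s, fun i => M i.1 * ω s i.1, E s) - (δb, 0, Eb)))
      (∑ i, activeP B δb Eb i * ω t i
        + ∑ i : {i // i ∈ Vg}, ((Eb i.1 - Ef i.1) / (Xd i.1 - Xd' i.1)) * dE i.1
        + ∑ i, (Bs i * Eb i - ∑ j, B i j * Eb j * Real.cos (δb i - δb j)) * dE i) t := by
    have heqf : (fun s => fderiv ℝ (Hp Vg M Xd Xd' Ef Bs B) (δb, 0, Eb)
          ((δ s, fun i => M i.1 * ω s i.1, E s) - (δb, 0, Eb)))
        = fun s => ∑ i, activeP B δb Eb i * (δ s i - δb i)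
          + ∑ i : {i // i ∈ Vg}, ((Eb i.1 - Ef i.1) / (Xd i.1 - Xd' i.1)) * (E s i.1 - Eb i.1)
          + ∑ i, (Bs i * Eb i - ∑ j, B i j * Eb j * Real.cos (δb i - δb j)) * (E s i - Eb i) := by
      funext s
      rw [hfdapp]
      rfl
    rw [heqf]
    exact ((HasDerivAt.fun_sum fun i _ => ((hδdot t i).sub_const (δb i)).const_mul
        (activeP B δb Eb i)).add
      (HasDerivAt.fun_sum fun i _ => ((hdE i.1).sub_const (Eb i.1)).const_mul
        ((Eb i.1 - Ef i.1) / (Xd i.1 - Xd' i.1)))).add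
      (HasDerivAt.fun_sum fun i _ => ((hdE i).sub_const (Eb i)).const_mul
        (Bs i * Eb i - ∑ j, B i j * Eb j * Real.cos (δb i - δb j)))
  -- derivative of the auxiliary energy along the trajectory
  have hHa1 : HasDerivAt (fun s => ∑ i : {i // i ∉ Vg},
        (fderiv ℝ (Hp Vg M Xd Xd' Ef Bs B) (δb, 0, Eb)
            ((0 : V → ℝ), (0 : {i // i ∈ Vg} → ℝ), Pi.single i.1 (1:ℝ)) * E s i.1
          - Qbar i * Real.log (E s i.1)))
      (∑ i : {i // i ∉ Vg},
        (fderiv ℝ (Hp Vg M Xd Xd' Ef Bs B) (δb, 0, Eb)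
            ((0 : V → ℝ), (0 : {i // i ∈ Vg} → ℝ), Pi.single i.1 (1:ℝ)) * dE i.1
          - Qbar i * (dE i.1 / E t i.1))) t :=
    HasDerivAt.fun_sum fun i _ => ((hdE i.1).const_mul _).sub
      (((hdE i.1).log (hEne i.1)).const_mul (Qbar i))
  -- derivatives of the controller storage terms
  have hcg : HasDerivAt (fun s => (1/2 : ℝ) * ∑ i, τg i * (Pg s i - Pgb i) ^ 2)
      (∑ i, (Pg t i - Pgb i) * (-(gradC (Pg t) i) + lg t i - ω t i.1)) t := by
    have h := HasDerivAt.const_mul (1/2 : ℝ) (HasDerivAt.fun_sum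
      (fun i (_ : i ∈ Finset.univ) => (((hPgdot t i).sub_const (Pgb i)).pow 2).const_mul (τg i)))
    refine HasDerivAt.congr_deriv h (Eq.symm ?_)
    rw [Finset.mul_sum]
    refine Finset.sum_congr rfl fun i _ => ?_
    field_simp [(hτg i).ne']
    ring
  have hcl : HasDerivAt (fun s => (1/2 : ℝ) * ∑ i, τl i * (Pl s i - Plb i) ^ 2)
      (∑ i, (Pl t i - Plb i) * (gradU (Pl t) i - ll t i + ω t i.1)) t := by
    have h := HasDerivAt.const_mul (1/2 : ℝ) (HasDerivAt.fun_sum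
      (fun i (_ : i ∈ Finset.univ) => (((hPldot t i).sub_const (Plb i)).pow 2).const_mul (τl i)))
    refine HasDerivAt.congr_deriv h (Eq.symm ?_)
    rw [Finset.mul_sum]
    refine Finset.sum_congr rfl fun i _ => ?_
    field_simp [(hτl i).ne']
    ring
  have hcv : HasDerivAt (fun s => (1/2 : ℝ) * ∑ e, τv e * (v s e - vb e) ^ 2)
      (∑ e, (v t e - vb e) * (-(∑ i : {i // i ∈ Vg}, Dc i.1 e * lg t i)
        - ∑ i : {i // i ∉ Vg}, Dc i.1 e * ll t i)) t := by
    have h := HasDerivAt.const_mul (1/2 : ℝ) (HasDerivAt.fun_sum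
      (fun e (_ : e ∈ Finset.univ) => (((hvdot t e).sub_const (vb e)).pow 2).const_mul (τv e)))
    refine HasDerivAt.congr_deriv h (Eq.symm ?_)
    rw [Finset.mul_sum]
    refine Finset.sum_congr rfl fun e _ => ?_
    field_simp [(hτv e).ne']
    ring
  have hclg : HasDerivAt (fun s => (1/2 : ℝ) * ∑ i, τlg i * (lg s i - lgb i) ^ 2)
      (∑ i, (lg t i - lgb i) * (∑ e, Dc i.1 e * v t e - Pg t i)) t := by
    have h := HasDerivAt.const_mul (1/2 : ℝ) (HasDerivAt.fun_sum
      (fun i (_ : i ∈ Finset.univ) => (((hlgdot t i).sub_const (lgb i)).pow 2).const_mul (τlg i)))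
    refine HasDerivAt.congr_deriv h (Eq.symm ?_)
    rw [Finset.mul_sum]
    refine Finset.sum_congr rfl fun i _ => ?_
    field_simp [(hτlg i).ne']
    ring
  have hcll : HasDerivAt (fun s => (1/2 : ℝ) * ∑ i, τll i * (ll s i - llb i) ^ 2)
      (∑ i, (ll t i - llb i) * (∑ e, Dc i.1 e * v t e + Pl t i)) t := by
    have h := HasDerivAt.const_mul (1/2 : ℝ) (HasDerivAt.fun_sum
      (fun i (_ : i ∈ Finset.univ) => (((hlldot t i).sub_const (llb i)).pow 2).const_mul (τll i)))
    refine HasDerivAt.congr_deriv h (Eq.symm ?_)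
    rw [Finset.mul_sum]
    refine Finset.sum_congr rfl fun i _ => ?_
    field_simp [(hτll i).ne']
    ring
  have hFraw := (((hHp1.sub hFd1).sub_const (Hp Vg M Xd Xd' Ef Bs B (δb, 0, Eb))).add hHa1).add
    ((((hcg.add hcl).add hcv).add hclg).add hcll)
  -- partial derivative of the total shifted energy in each generator E-direction
  have hslice : ∀ i : {i // i ∈ Vg},
      deriv (fun s => HbarTot Vg M Xd Xd' Ef Bs B (δb, 0, Eb) Qbar τg τlg τl τll τv
        Pgb lgb Plb llb vb (δ t) (fun j => M j.1 * ω t j.1) (Function.update (E t) i.1 s)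
        (Pg t) (lg t) (Pl t) (ll t) (v t)) (E t i.1)
      = (E t i.1 - Ef i.1) / (Xd i.1 - Xd' i.1)
        + (Bs i.1 * E t i.1 - ∑ j, B i.1 j * E t j * Real.cos (δ t i.1 - δ t j)) := by
    intro i
    have hEc : ∀ j, HasDerivAt (fun s => Function.update (E t) i.1 s j)
        ((Pi.single i.1 (1:ℝ) : V → ℝ) j) (E t i.1) := by
      intro j
      by_cases h : j = i.1
      · subst h
        simp only [Function.update_self, Pi.single_eq_same]
        exact hasDerivAt_id _
      · simp only [Function.update_of_ne h, Pi.single_eq_of_ne h]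
        exact hasDerivAt_const _ _
    have hsub : ∀ f : V → ℝ,
        ∑ j : {i // i ∈ Vg}, f j.1 * (Pi.single i.1 (1:ℝ) : V → ℝ) j.1 = f i.1 := by
      intro f
      rw [Finset.sum_eq_single i]
      · rw [Pi.single_eq_same, mul_one]
      · intro b _ hb
        rw [Pi.single_eq_of_ne (fun hc => hb (Subtype.ext hc)), mul_zero]
      · intro h
        exact absurd (Finset.mem_univ i) h
    have hfull : ∀ f : V → ℝ, ∑ j, f j * (Pi.single i.1 (1:ℝ) : V → ℝ) j = f i.1 := by
      intro f
      rw [Finset.sum_eq_single i.1]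
      · rw [Pi.single_eq_same, mul_one]
      · intro b _ hb
        rw [Pi.single_eq_of_ne hb, mul_zero]
      · intro h
        exact absurd (Finset.mem_univ i.1) h
    have hsubE : ∑ j : {i // i ∈ Vg},
        (E t j.1 - Ef j.1) / (Xd j.1 - Xd' j.1) * (Pi.single i.1 (1:ℝ) : V → ℝ) j.1
        = (E t i.1 - Ef i.1) / (Xd i.1 - Xd' i.1) :=
      hsub (fun w => (E t w - Ef w) / (Xd w - Xd' w))
    have hfullE : ∑ j, (Bs j * E t j - ∑ k, B j k * E t k * Real.cos (δ t j - δ t k))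
          * (Pi.single i.1 (1:ℝ) : V → ℝ) j
        = Bs i.1 * E t i.1 - ∑ k, B i.1 k * E t k * Real.cos (δ t i.1 - δ t k) :=
      hfull (fun w => Bs w * E t w - ∑ k, B w k * E t k * Real.cos (δ t w - δ t k))
    have hsubEb : ∑ j : {i // i ∈ Vg},
        (Eb j.1 - Ef j.1) / (Xd j.1 - Xd' j.1) * (Pi.single i.1 (1:ℝ) : V → ℝ) j.1
        = (Eb i.1 - Ef i.1) / (Xd i.1 - Xd' i.1) :=
      hsub (fun w => (Eb w - Ef w) / (Xd w - Xd' w))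
    have hfullEb : ∑ j, (Bs j * Eb j - ∑ k, B j k * Eb k * Real.cos (δb j - δb k))
          * (Pi.single i.1 (1:ℝ) : V → ℝ) j
        = Bs i.1 * Eb i.1 - ∑ k, B i.1 k * Eb k * Real.cos (δb i.1 - δb k) :=
      hfull (fun w => Bs w * Eb w - ∑ k, B w k * Eb k * Real.cos (δb w - δb k))
    have hHps := hasDerivAt_Hp_curve Vg M Xd Xd' Ef Bs B hBsym (fun _ => δ t)
      (fun s => Function.update (E t) i.1 s) (fun _ j => M j.1 * ω t j.1)
      (0 : V → ℝ) (Pi.single i.1 (1:ℝ)) (0 : {i // i ∈ Vg} → ℝ) (E t i.1)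
      (fun j => hasDerivAt_const _ _) (fun j => hasDerivAt_const _ _) hEc
    simp only [Function.update_eq_self, Pi.zero_apply, mul_zero, Finset.sum_const_zero,
      zero_add] at hHps
    rw [hsubE, hfullE] at hHps
    have hfds : HasDerivAt (fun s => fderiv ℝ (Hp Vg M Xd Xd' Ef Bs B) (δb, 0, Eb)
          ((δ t, fun j => M j.1 * ω t j.1, Function.update (E t) i.1 s) - (δb, 0, Eb)))
        ((Eb i.1 - Ef i.1) / (Xd i.1 - Xd' i.1)
          + (Bs i.1 * Eb i.1 - ∑ j, B i.1 j * Eb j * Real.cos (δb i.1 - δb j))) (E t i.1) := by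
      have heqf : (fun s => fderiv ℝ (Hp Vg M Xd Xd' Ef Bs B) (δb, 0, Eb)
            ((δ t, fun j => M j.1 * ω t j.1, Function.update (E t) i.1 s) - (δb, 0, Eb)))
          = fun s => ∑ j, activeP B δb Eb j * (δ t j - δb j)
            + ∑ j : {i // i ∈ Vg}, ((Eb j.1 - Ef j.1) / (Xd j.1 - Xd' j.1))
                * (Function.update (E t) i.1 s j.1 - Eb j.1)
            + ∑ j, (Bs j * Eb j - ∑ k, B j k * Eb k * Real.cos (δb j - δb k))
                * (Function.update (E t) i.1 s j - Eb j) := by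
        funext s
        rw [hfdapp]
        rfl
      rw [heqf]
      have h := ((hasDerivAt_const (E t i.1)
          (∑ j, activeP B δb Eb j * (δ t j - δb j))).add
        (HasDerivAt.fun_sum fun (j : {i // i ∈ Vg}) (_ : j ∈ Finset.univ) =>
          ((hEc j.1).sub_const (Eb j.1)).const_mul
            ((Eb j.1 - Ef j.1) / (Xd j.1 - Xd' j.1)))).add
        (HasDerivAt.fun_sum fun (j : V) (_ : j ∈ Finset.univ) =>
          ((hEc j).sub_const (Eb j)).const_mul
            (Bs j * Eb j - ∑ k, B j k * Eb k * Real.cos (δb j - δb k)))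
      refine HasDerivAt.congr_deriv h (Eq.symm ?_)
      rw [hsubEb, hfullEb]
      ring
    have hAs : HasDerivAt (fun s => HbarA Vg M Xd Xd' Ef Bs B (δb, 0, Eb) Qbar
        (Function.update (E t) i.1 s)) 0 (E t i.1) := by
      have he : (fun s => HbarA Vg M Xd Xd' Ef Bs B (δb, 0, Eb) Qbar
            (Function.update (E t) i.1 s))
          = fun _ => HbarA Vg M Xd Xd' Ef Bs B (δb, 0, Eb) Qbar (E t) := by
        funext s
        unfold HbarA
        refine Finset.sum_congr rfl fun j _ => ?_
        rw [Function.update_of_ne (fun hc : j.1 = i.1 => j.2 (hc ▸ i.2))]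
      rw [he]
      exact hasDerivAt_const _ _
    have htot : HasDerivAt (fun s => HbarTot Vg M Xd Xd' Ef Bs B (δb, 0, Eb) Qbar
        τg τlg τl τll τv Pgb lgb Plb llb vb (δ t) (fun j => M j.1 * ω t j.1)
        (Function.update (E t) i.1 s) (Pg t) (lg t) (Pl t) (ll t) (v t))
        (((E t i.1 - Ef i.1) / (Xd i.1 - Xd' i.1)
            + (Bs i.1 * E t i.1 - ∑ j, B i.1 j * E t j * Real.cos (δ t i.1 - δ t j))
          - ((Eb i.1 - Ef i.1) / (Xd i.1 - Xd' i.1)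
            + (Bs i.1 * Eb i.1 - ∑ j, B i.1 j * Eb j * Real.cos (δb i.1 - δb j))))
          + 0) (E t i.1) := by
      unfold HbarTot HbarP
      exact (((hHps.sub hfds).sub_const (Hp Vg M Xd Xd' Ef Bs B (δb, 0, Eb))).add hAs).add_const
        (HbarC Vg τg τlg τl τll τv Pgb lgb Plb llb vb (Pg t) (lg t) (Pl t) (ll t) (v t))
    rw [htot.deriv]
    have hc := hcbar0 i.1 i.2
    linarith
  -- evaluate the deriv-sum in decayRate
  have hsliceSum : ∑ i : {i // i ∈ Vg}, ((Xd i.1 - Xd' i.1) / T i.1) *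
        (deriv (fun s => HbarTot Vg M Xd Xd' Ef Bs B (δb, 0, Eb) Qbar τg τlg τl τll τv
          Pgb lgb Plb llb vb (δ t) (fun j => M j.1 * ω t j.1) (Function.update (E t) i.1 s)
          (Pg t) (lg t) (Pl t) (ll t) (v t)) (E t i.1)) ^ 2
      = ∑ i : {i // i ∈ Vg}, ((Xd i.1 - Xd' i.1) / T i.1) *
          ((E t i.1 - Ef i.1) / (Xd i.1 - Xd' i.1)
            + (Bs i.1 * E t i.1 - ∑ j, B i.1 j * E t j * Real.cos (δ t i.1 - δ t j))) ^ 2 :=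
    Finset.sum_congr rfl fun i _ => by rw [hslice i]
  have hdecR : decayRate Vg M A T Xd Xd' Ef Bs B (δb, 0, Eb) Qbar τg τlg τl τll τv
        Pgb lgb Plb llb vb gradC gradU
        (δ t) (ω t) (E t) (Pg t) (lg t) (Pl t) (ll t) (v t)
      = -(∑ i : {i // i ∈ Vg}, A i.1 * ω t i.1 ^ 2)
        - ∑ i : {i // i ∉ Vg}, A i.1 * ω t i.1 ^ 2
        - ∑ i : {i // i ∈ Vg}, ((Xd i.1 - Xd' i.1) / T i.1) *
            ((E t i.1 - Ef i.1) / (Xd i.1 - Xd' i.1)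
              + (Bs i.1 * E t i.1 - ∑ j, B i.1 j * E t j * Real.cos (δ t i.1 - δ t j))) ^ 2
        - ∑ i : {i // i ∈ Vg}, (Pg t i - Pgb i) * (gradC (Pg t) i - gradC Pgb i)
        + ∑ i : {i // i ∉ Vg}, (Pl t i - Plb i) * (gradU (Pl t) i - gradU Plb i) := by
    unfold decayRate
    rw [hsliceSum]
  -- the big algebraic bookkeeping
  have ha1 : ∑ i, activeP B (δ t) (E t) i * ω t i
      = ∑ i : {i // i ∈ Vg}, activeP B (δ t) (E t) i.1 * ω t i.1
        + ∑ i : {i // i ∉ Vg}, activeP B (δ t) (E t) i.1 * ω t i.1 := hsplit _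
  have ha2 : ∑ i, activeP B δb Eb i * ω t i
      = ∑ i : {i // i ∈ Vg}, activeP B δb Eb i.1 * ω t i.1
        + ∑ i : {i // i ∉ Vg}, activeP B δb Eb i.1 * ω t i.1 := hsplit _
  have ha3 : ∑ i, (Bs i * E t i - ∑ j, B i j * E t j * Real.cos (δ t i - δ t j)) * dE i
      = ∑ i : {i // i ∈ Vg},
          (Bs i.1 * E t i.1 - ∑ j, B i.1 j * E t j * Real.cos (δ t i.1 - δ t j)) * dE i.1
        + ∑ i : {i // i ∉ Vg},
          (Bs i.1 * E t i.1 - ∑ j, B i.1 j * E t j * Real.cos (δ t i.1 - δ t j)) * dE i.1 :=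
    hsplit _
  have ha4 : ∑ i, (Bs i * Eb i - ∑ j, B i j * Eb j * Real.cos (δb i - δb j)) * dE i
      = ∑ i : {i // i ∈ Vg},
          (Bs i.1 * Eb i.1 - ∑ j, B i.1 j * Eb j * Real.cos (δb i.1 - δb j)) * dE i.1
        + ∑ i : {i // i ∉ Vg},
          (Bs i.1 * Eb i.1 - ∑ j, B i.1 j * Eb j * Real.cos (δb i.1 - δb j)) * dE i.1 :=
    hsplit _
  have hb5 : ∑ i : {i // i ∈ Vg}, (M i.1 * ω t i.1 / M i.1) *
        (-(activeP B (δ t) (E t) i.1) - A i.1 * ω t i.1 + Pg t i)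
      = ∑ i : {i // i ∈ Vg}, ω t i.1 *
        (-(activeP B (δ t) (E t) i.1) - A i.1 * ω t i.1 + Pg t i) :=
    Finset.sum_congr rfl fun i _ => by rw [mul_div_cancel_left₀ _ (hMne i.1)]
  have hb6 : ∑ i : {i // i ∈ Vg}, ((E t i.1 - Ef i.1) / (Xd i.1 - Xd' i.1)) * dE i.1
        + ∑ i : {i // i ∈ Vg},
            (Bs i.1 * E t i.1 - ∑ j, B i.1 j * E t j * Real.cos (δ t i.1 - δ t j)) * dE i.1
        - ∑ i : {i // i ∈ Vg}, ((Eb i.1 - Ef i.1) / (Xd i.1 - Xd' i.1)) * dE i.1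
        - ∑ i : {i // i ∈ Vg},
            (Bs i.1 * Eb i.1 - ∑ j, B i.1 j * Eb j * Real.cos (δb i.1 - δb j)) * dE i.1
      = -∑ i : {i // i ∈ Vg}, ((Xd i.1 - Xd' i.1) / T i.1) *
          ((E t i.1 - Ef i.1) / (Xd i.1 - Xd' i.1)
            + (Bs i.1 * E t i.1 - ∑ j, B i.1 j * E t j * Real.cos (δ t i.1 - δ t j))) ^ 2 := by
    rw [← Finset.sum_add_distrib, ← Finset.sum_sub_distrib, ← Finset.sum_sub_distrib,
      ← Finset.sum_neg_distrib]
    refine Finset.sum_congr rfl fun i _ => ?_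
    have hc := hcbar0 i.1 i.2
    have hdE2 : dE i.1 = -((Xd i.1 - Xd' i.1) / T i.1) *
        ((E t i.1 - Ef i.1) / (Xd i.1 - Xd' i.1)
          + reactiveQ B Bs (δ t) (E t) i.1 / E t i.1) := by
      rw [hdEg i.1 i.2]
      field_simp [hXne i.1, hTne i.1, hEne i.1]
      ring
    rw [gE_eq_Q_div B Bs (δ t) (E t) i.1 (hEne i.1), hdE2]
    linear_combination (((Xd i.1 - Xd' i.1) / T i.1) *
      ((E t i.1 - Ef i.1) / (Xd i.1 - Xd' i.1)
        + reactiveQ B Bs (δ t) (E t) i.1 / E t i.1)) * hc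
  have hb7 : ∑ i : {i // i ∉ Vg},
        (fderiv ℝ (Hp Vg M Xd Xd' Ef Bs B) (δb, 0, Eb)
            ((0 : V → ℝ), (0 : {i // i ∈ Vg} → ℝ), Pi.single i.1 (1:ℝ)) * dE i.1
          - Qbar i * (dE i.1 / E t i.1))
        + ∑ i : {i // i ∉ Vg},
            (Bs i.1 * E t i.1 - ∑ j, B i.1 j * E t j * Real.cos (δ t i.1 - δ t j)) * dE i.1
        - ∑ i : {i // i ∉ Vg},
            (Bs i.1 * Eb i.1 - ∑ j, B i.1 j * Eb j * Real.cos (δb i.1 - δb j)) * dE i.1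
      = 0 := by
    rw [← Finset.sum_add_distrib, ← Finset.sum_sub_distrib]
    refine Finset.sum_eq_zero fun i _ => ?_
    rw [hfdsingle i, hQloadt i.1 i.2]
    simp only [Subtype.coe_eta]
    ring
  have hb8 : ∑ i : {i // i ∉ Vg}, activeP B (δ t) (E t) i.1 * ω t i.1
        - ∑ i : {i // i ∉ Vg}, activeP B δb Eb i.1 * ω t i.1
      = -(∑ i : {i // i ∉ Vg}, A i.1 * ω t i.1 ^ 2)
        - ∑ i : {i // i ∉ Vg}, ω t i.1 * (Pl t i - Plb i) := by
    rw [← Finset.sum_sub_distrib, ← Finset.sum_neg_distrib, ← Finset.sum_sub_distrib]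
    refine Finset.sum_congr rfl fun i _ => ?_
    rw [hPalg t i.1 i.2, heqPl i.1 i.2]
    simp only [Subtype.coe_eta]
    ring
  have hb9 : ∑ i : {i // i ∈ Vg}, activeP B (δ t) (E t) i.1 * ω t i.1
        - ∑ i : {i // i ∈ Vg}, activeP B δb Eb i.1 * ω t i.1
        + ∑ i : {i // i ∈ Vg}, ω t i.1 *
            (-(activeP B (δ t) (E t) i.1) - A i.1 * ω t i.1 + Pg t i)
      = -(∑ i : {i // i ∈ Vg}, A i.1 * ω t i.1 ^ 2)
        + ∑ i : {i // i ∈ Vg}, ω t i.1 * (Pg t i - Pgb i) := by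
    rw [← Finset.sum_sub_distrib, ← Finset.sum_add_distrib, ← Finset.sum_neg_distrib,
      ← Finset.sum_add_distrib]
    refine Finset.sum_congr rfl fun i _ => ?_
    have h := heqω i.1 i.2
    simp only [Subtype.coe_eta] at h
    linear_combination (-(ω t i.1)) * h
  have hb10 : ∑ i, (Pg t i - Pgb i) * (-(gradC (Pg t) i) + lg t i - ω t i.1)
      = -(∑ i : {i // i ∈ Vg}, (Pg t i - Pgb i) * (gradC (Pg t) i - gradC Pgb i))
        + ∑ i : {i // i ∈ Vg}, (Pg t i - Pgb i) * (lg t i - lgb i)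
        - ∑ i : {i // i ∈ Vg}, ω t i.1 * (Pg t i - Pgb i) := by
    rw [← Finset.sum_neg_distrib, ← Finset.sum_add_distrib, ← Finset.sum_sub_distrib]
    refine Finset.sum_congr rfl fun i _ => ?_
    linear_combination (Pgb i - Pg t i) * heqPg i
  have hb11 : ∑ i, (Pl t i - Plb i) * (gradU (Pl t) i - ll t i + ω t i.1)
      = ∑ i : {i // i ∉ Vg}, (Pl t i - Plb i) * (gradU (Pl t) i - gradU Plb i)
        - ∑ i : {i // i ∉ Vg}, (Pl t i - Plb i) * (ll t i - llb i)
        + ∑ i : {i // i ∉ Vg}, ω t i.1 * (Pl t i - Plb i) := by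
    rw [← Finset.sum_sub_distrib, ← Finset.sum_add_distrib]
    refine Finset.sum_congr rfl fun i _ => ?_
    linear_combination (Plb i - Pl t i) * heqPlc i
  have hb12 : ∑ e, (v t e - vb e) * (-(∑ i : {i // i ∈ Vg}, Dc i.1 e * lg t i)
        - ∑ i : {i // i ∉ Vg}, Dc i.1 e * ll t i)
      = -(∑ e, (v t e - vb e) * (∑ i : {i // i ∈ Vg}, Dc i.1 e * (lg t i - lgb i)))
        - ∑ e, (v t e - vb e) * (∑ i : {i // i ∉ Vg}, Dc i.1 e * (ll t i - llb i)) := by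
    rw [← Finset.sum_neg_distrib, ← Finset.sum_sub_distrib]
    refine Finset.sum_congr rfl fun e _ => ?_
    have e1 : ∑ i : {i // i ∈ Vg}, Dc i.1 e * (lg t i - lgb i)
        = ∑ i : {i // i ∈ Vg}, Dc i.1 e * lg t i - ∑ i : {i // i ∈ Vg}, Dc i.1 e * lgb i := by
      rw [← Finset.sum_sub_distrib]
      exact Finset.sum_congr rfl fun i _ => by ring
    have e2 : ∑ i : {i // i ∉ Vg}, Dc i.1 e * (ll t i - llb i)
        = ∑ i : {i // i ∉ Vg}, Dc i.1 e * ll t i - ∑ i : {i // i ∉ Vg}, Dc i.1 e * llb i := by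
      rw [← Finset.sum_sub_distrib]
      exact Finset.sum_congr rfl fun i _ => by ring
    rw [e1, e2]
    linear_combination (vb e - v t e) * heqv e
  have hb13 : ∑ i, (lg t i - lgb i) * (∑ e, Dc i.1 e * v t e - Pg t i)
      = ∑ i : {i // i ∈ Vg}, (lg t i - lgb i) * (∑ e, Dc i.1 e * (v t e - vb e))
        - ∑ i : {i // i ∈ Vg}, (Pg t i - Pgb i) * (lg t i - lgb i) := by
    rw [← Finset.sum_sub_distrib]
    refine Finset.sum_congr rfl fun i _ => ?_
    have e3 : ∑ e, Dc i.1 e * (v t e - vb e)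
        = ∑ e, Dc i.1 e * v t e - ∑ e, Dc i.1 e * vb e := by
      rw [← Finset.sum_sub_distrib]
      exact Finset.sum_congr rfl fun e _ => by ring
    rw [e3]
    linear_combination (lgb i - lg t i) * heqlg i
  have hb14 : ∑ i, (ll t i - llb i) * (∑ e, Dc i.1 e * v t e + Pl t i)
      = ∑ i : {i // i ∉ Vg}, (ll t i - llb i) * (∑ e, Dc i.1 e * (v t e - vb e))
        + ∑ i : {i // i ∉ Vg}, (Pl t i - Plb i) * (ll t i - llb i) := by
    rw [← Finset.sum_add_distrib]
    refine Finset.sum_congr rfl fun i _ => ?_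
    have e3 : ∑ e, Dc i.1 e * (v t e - vb e)
        = ∑ e, Dc i.1 e * v t e - ∑ e, Dc i.1 e * vb e := by
      rw [← Finset.sum_sub_distrib]
      exact Finset.sum_congr rfl fun e _ => by ring
    rw [e3]
    linear_combination (llb i - ll t i) * heqll i
  have hb15 : ∑ e, (v t e - vb e) * (∑ i : {i // i ∈ Vg}, Dc i.1 e * (lg t i - lgb i))
      = ∑ i : {i // i ∈ Vg}, (lg t i - lgb i) * (∑ e, Dc i.1 e * (v t e - vb e)) := by
    simp_rw [Finset.mul_sum]
    rw [Finset.sum_comm]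
    exact Finset.sum_congr rfl fun i _ => Finset.sum_congr rfl fun e _ => by ring
  have hb16 : ∑ e, (v t e - vb e) * (∑ i : {i // i ∉ Vg}, Dc i.1 e * (ll t i - llb i))
      = ∑ i : {i // i ∉ Vg}, (ll t i - llb i) * (∑ e, Dc i.1 e * (v t e - vb e)) := by
    simp_rw [Finset.mul_sum]
    rw [Finset.sum_comm]
    exact Finset.sum_congr rfl fun i _ => Finset.sum_congr rfl fun e _ => by ring
  have hval : (∑ i, activeP B (δ t) (E t) i * ω t i
        + ∑ i : {i // i ∈ Vg}, (M i.1 * ω t i.1 / M i.1) *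
            (-(activeP B (δ t) (E t) i.1) - A i.1 * ω t i.1 + Pg t i)
        + ∑ i : {i // i ∈ Vg}, ((E t i.1 - Ef i.1) / (Xd i.1 - Xd' i.1)) * dE i.1
        + ∑ i, (Bs i * E t i - ∑ j, B i j * E t j * Real.cos (δ t i - δ t j)) * dE i)
      - (∑ i, activeP B δb Eb i * ω t i
        + ∑ i : {i // i ∈ Vg}, ((Eb i.1 - Ef i.1) / (Xd i.1 - Xd' i.1)) * dE i.1
        + ∑ i, (Bs i * Eb i - ∑ j, B i j * Eb j * Real.cos (δb i - δb j)) * dE i)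
      + ∑ i : {i // i ∉ Vg},
          (fderiv ℝ (Hp Vg M Xd Xd' Ef Bs B) (δb, 0, Eb)
              ((0 : V → ℝ), (0 : {i // i ∈ Vg} → ℝ), Pi.single i.1 (1:ℝ)) * dE i.1
            - Qbar i * (dE i.1 / E t i.1))
      + (∑ i, (Pg t i - Pgb i) * (-(gradC (Pg t) i) + lg t i - ω t i.1)
        + ∑ i, (Pl t i - Plb i) * (gradU (Pl t) i - ll t i + ω t i.1)
        + ∑ e, (v t e - vb e) * (-(∑ i : {i // i ∈ Vg}, Dc i.1 e * lg t i)
            - ∑ i : {i // i ∉ Vg}, Dc i.1 e * ll t i)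
        + ∑ i, (lg t i - lgb i) * (∑ e, Dc i.1 e * v t e - Pg t i)
        + ∑ i, (ll t i - llb i) * (∑ e, Dc i.1 e * v t e + Pl t i))
      = -(∑ i : {i // i ∈ Vg}, A i.1 * ω t i.1 ^ 2)
        - ∑ i : {i // i ∉ Vg}, A i.1 * ω t i.1 ^ 2
        - ∑ i : {i // i ∈ Vg}, ((Xd i.1 - Xd' i.1) / T i.1) *
            ((E t i.1 - Ef i.1) / (Xd i.1 - Xd' i.1)
              + (Bs i.1 * E t i.1 - ∑ j, B i.1 j * E t j * Real.cos (δ t i.1 - δ t j))) ^ 2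
        - ∑ i : {i // i ∈ Vg}, (Pg t i - Pgb i) * (gradC (Pg t) i - gradC Pgb i)
        + ∑ i : {i // i ∉ Vg}, (Pl t i - Plb i) * (gradU (Pl t) i - gradU Plb i) := by
    rw [ha1, ha2, ha3, ha4, hb5, hb10, hb11, hb12, hb13, hb14, hb15, hb16]
    linarith [hb6, hb7, hb8, hb9]
  constructor
  · rw [hdecR, ← hval]
    unfold HbarTot HbarP HbarA HbarC
    exact hFraw
  · rw [hdecR]
    have t1 : (0:ℝ) ≤ ∑ i : {i // i ∈ Vg}, A i.1 * ω t i.1 ^ 2 :=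
      Finset.sum_nonneg fun i _ => mul_nonneg (le_of_lt (hA i.1)) (sq_nonneg _)
    have t2 : (0:ℝ) ≤ ∑ i : {i // i ∉ Vg}, A i.1 * ω t i.1 ^ 2 :=
      Finset.sum_nonneg fun i _ => mul_nonneg (le_of_lt (hA i.1)) (sq_nonneg _)
    have t3 : (0:ℝ) ≤ ∑ i : {i // i ∈ Vg}, ((Xd i.1 - Xd' i.1) / T i.1) *
        ((E t i.1 - Ef i.1) / (Xd i.1 - Xd' i.1)
          + (Bs i.1 * E t i.1 - ∑ j, B i.1 j * E t j * Real.cos (δ t i.1 - δ t j))) ^ 2 :=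
      Finset.sum_nonneg fun i _ => mul_nonneg
        (div_nonneg (by linarith [hX i.1]) (le_of_lt (hT i.1))) (sq_nonneg _)
    have t4 : (0:ℝ) ≤ ∑ i : {i // i ∈ Vg}, (Pg t i - Pgb i) * (gradC (Pg t) i - gradC Pgb i) :=
      convex_grad_mono hCconv hgradC Pgb (Pg t)
    have t5 : ∑ i : {i // i ∉ Vg}, (Pl t i - Plb i) * (gradU (Pl t) i - gradU Plb i) ≤ 0 :=
      concave_grad_mono hUconc hgradU Plb (Pl t)
    linarith
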